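/- (Boundedness of the IMEX solution, Lemma 2.1) Let n_ξ ≥ 2, n_x ≥ 1 be integers, γ, ν, τ, h_ξ > 0 reals, A = (1+γτ) I_{n_ξ} − (τν/h_ξ²) Δ with Δ the n_ξ×n_ξ Neumann finite-difference Laplacian matrix. Suppose |W| ≤ C_W, |S| ≤ C_S, the quadrature weights are nonnegative with (Σ_j ρ_j)(Σ_i σ_i) = μ, and the input matrices G^n ∈ ℝ^{n_ξ×n_x} have all entries bounded in absolute value by C_G. Then for every initial matrix V^0 ∈ ℝ^{n_ξ×n_x} there is a unique sequence (V^n)_{n∈ℕ} satisfying the IMEX scheme A V^n = V^{n−1} + τ N(V^{n−1}) + τ G^{n−1} for all n ≥ 1, this sequence is bounded, and |V^n|_∞ ≤ |V^0|_∞ + n_x ( μ C_W C_S + C_G ) / γ for every n ∈ ℕ. -/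

import Mathlib

open Real Finset

/-- The `n × n` second-order centred finite-difference Laplacian incorporating
Neumann boundary conditions. -/
def neumannLaplacian (n : ℕ) : Matrix (Fin n) (Fin n) ℝ :=
  Matrix.of fun i j =>
    if (i : ℕ) = (j : ℕ) then -2
    else if (i : ℕ) = 0 ∧ (j : ℕ) = 1 then 2
    else if (i : ℕ) = n - 1 ∧ (j : ℕ) = n - 2 then 2
    else if (j : ℕ) + 1 = (i : ℕ) ∨ (i : ℕ) + 1 = (j : ℕ) then 1
    else 0

lemma nl_diag (n : ℕ) (i : Fin n) : neumannLaplacian n i i = -2 := by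
  simp [neumannLaplacian]

lemma nl_offdiag_sum (n : ℕ) (hn : 2 ≤ n) (i : Fin n) :
    ∑ j ∈ Finset.univ.erase i, |neumannLaplacian n i j| ≤ 2 := by
  have hilt := i.isLt
  by_cases hi0 : (i : ℕ) = 0
  · have hcongr : ∀ j ∈ Finset.univ.erase i,
        |neumannLaplacian n i j| = if j = (⟨1, by omega⟩ : Fin n) then (2:ℝ) else 0 := by
      intro j hj
      have hji : (j : ℕ) ≠ (i : ℕ) := fun h => (Finset.mem_erase.mp hj).1 (Fin.ext h)
      have hjlt := j.isLt
      by_cases hj1 : (j : ℕ) = 1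
      · rw [if_pos (Fin.ext (by simpa using hj1))]
        simp only [neumannLaplacian, Matrix.of_apply]
        rw [if_neg (by omega), if_pos (by exact ⟨hi0, hj1⟩)]
        norm_num
      · rw [if_neg (fun h => hj1 (by simpa using congrArg Fin.val h))]
        simp only [neumannLaplacian, Matrix.of_apply]
        rw [if_neg (by omega), if_neg (by omega), if_neg (by omega), if_neg (by omega)]
        norm_num
    rw [Finset.sum_congr rfl hcongr, Finset.sum_ite_eq']
    rw [if_pos (Finset.mem_erase.mpr ⟨by simp only [ne_eq, Fin.ext_iff]; omega, Finset.mem_univ _⟩)]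
  · by_cases hin : (i : ℕ) = n - 1
    · have hcongr : ∀ j ∈ Finset.univ.erase i,
          |neumannLaplacian n i j| = if j = (⟨n-2, by omega⟩ : Fin n) then (2:ℝ) else 0 := by
        intro j hj
        have hji : (j : ℕ) ≠ (i : ℕ) := fun h => (Finset.mem_erase.mp hj).1 (Fin.ext h)
        have hjlt := j.isLt
        by_cases hj1 : (j : ℕ) = n - 2
        · rw [if_pos (Fin.ext (by simpa using hj1))]
          simp only [neumannLaplacian, Matrix.of_apply]
          rw [if_neg (by omega), if_neg (by omega), if_pos (by exact ⟨hin, hj1⟩)]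
          norm_num
        · rw [if_neg (fun h => hj1 (by simpa using congrArg Fin.val h))]
          simp only [neumannLaplacian, Matrix.of_apply]
          rw [if_neg (by omega), if_neg (by omega), if_neg (by omega), if_neg (by omega)]
          norm_num
      rw [Finset.sum_congr rfl hcongr, Finset.sum_ite_eq']
      rw [if_pos (Finset.mem_erase.mpr ⟨by simp only [ne_eq, Fin.ext_iff]; omega, Finset.mem_univ _⟩)]
    · have hcongr : ∀ j ∈ Finset.univ.erase i,
          |neumannLaplacian n i j| =
            (if j = (⟨(i:ℕ)-1, by omega⟩ : Fin n) then (1:ℝ) else 0)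
          + (if j = (⟨(i:ℕ)+1, by omega⟩ : Fin n) then (1:ℝ) else 0) := by
        intro j hj
        have hji : (j : ℕ) ≠ (i : ℕ) := fun h => (Finset.mem_erase.mp hj).1 (Fin.ext h)
        have hjlt := j.isLt
        by_cases hjm : (j : ℕ) = (i:ℕ) - 1
        · rw [if_pos (Fin.ext (by simpa using hjm)), if_neg (fun h => by
            have := congrArg Fin.val h; simp at this; omega)]
          simp only [neumannLaplacian, Matrix.of_apply]
          rw [if_neg (by omega), if_neg (by omega), if_neg (by omega), if_pos (by omega)]
          norm_num
        · by_cases hjp : (j : ℕ) = (i:ℕ) + 1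
          · rw [if_neg (fun h => by have := congrArg Fin.val h; simp at this; omega),
              if_pos (Fin.ext (by simpa using hjp))]
            simp only [neumannLaplacian, Matrix.of_apply]
            rw [if_neg (by omega), if_neg (by omega), if_neg (by omega), if_pos (by omega)]
            norm_num
          · rw [if_neg (fun h => by have := congrArg Fin.val h; simp at this; omega),
              if_neg (fun h => by have := congrArg Fin.val h; simp at this; omega)]
            simp only [neumannLaplacian, Matrix.of_apply]
            rw [if_neg (by omega), if_neg (by omega), if_neg (by omega), if_neg (by omega)]
            norm_num
      rw [Finset.sum_congr rfl hcongr, Finset.sum_add_distrib,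
        Finset.sum_ite_eq', Finset.sum_ite_eq']
      rw [if_pos (Finset.mem_erase.mpr ⟨by simp only [ne_eq, Fin.ext_iff]; omega, Finset.mem_univ _⟩),
        if_pos (Finset.mem_erase.mpr ⟨by simp only [ne_eq, Fin.ext_iff]; omega, Finset.mem_univ _⟩)]
      norm_num

lemma vec_bound (n : ℕ) (hn : 2 ≤ n) (α c : ℝ) (hα : 0 ≤ α) (hc : 0 ≤ c)
    (A : Matrix (Fin n) (Fin n) ℝ)
    (hA : A = (1 + α) • (1 : Matrix (Fin n) (Fin n) ℝ) - c • neumannLaplacian n)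
    (u : Fin n → ℝ) (i0 : Fin n) (hmax : ∀ k, |u k| ≤ |u i0|) :
    (1 + α) * |u i0| ≤ |A.mulVec u i0| := by
  set R := ∑ k ∈ Finset.univ.erase i0, neumannLaplacian n i0 k * u k with hR
  have hsplit : ∑ k, neumannLaplacian n i0 k * u k = -2 * u i0 + R := by
    rw [← Finset.add_sum_erase _ _ (Finset.mem_univ i0), nl_diag]
  have hmv : A.mulVec u i0 = (1 + α + 2*c) * u i0 - c * R := by
    simp only [hA, Matrix.mulVec, dotProduct, Matrix.sub_apply, Matrix.smul_apply,
      Matrix.one_apply, smul_eq_mul, sub_mul, mul_ite, mul_one, mul_zero, ite_mul, zero_mul]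
    rw [Finset.sum_sub_distrib, Finset.sum_ite_eq, if_pos (Finset.mem_univ i0)]
    have : ∑ k, c * neumannLaplacian n i0 k * u k = c * ∑ k, neumannLaplacian n i0 k * u k := by
      rw [Finset.mul_sum]; exact Finset.sum_congr rfl fun k _ => by ring
    rw [this, hsplit]; ring
  have hRb : |R| ≤ 2 * |u i0| := by
    calc |R| ≤ ∑ k ∈ Finset.univ.erase i0, |neumannLaplacian n i0 k * u k| :=
          Finset.abs_sum_le_sum_abs _ _
      _ ≤ ∑ k ∈ Finset.univ.erase i0, |neumannLaplacian n i0 k| * |u i0| :=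
          Finset.sum_le_sum fun k _ => by
            rw [abs_mul]; exact mul_le_mul_of_nonneg_left (hmax k) (abs_nonneg _)
      _ = (∑ k ∈ Finset.univ.erase i0, |neumannLaplacian n i0 k|) * |u i0| :=
          (Finset.sum_mul _ _ _).symm
      _ ≤ 2 * |u i0| := mul_le_mul_of_nonneg_right (nl_offdiag_sum n hn i0) (abs_nonneg _)
  have h1 : |(1 + α + 2*c) * u i0| - |c * R| ≤ |A.mulVec u i0| := by
    rw [hmv]; exact abs_sub_abs_le_abs_sub _ _
  rw [abs_mul, abs_mul, abs_of_nonneg (by linarith : (0:ℝ) ≤ 1 + α + 2*c),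
    abs_of_nonneg hc] at h1
  nlinarith [abs_nonneg (u i0)]


/-- The matrix norm induced by the vector `∞`-norm:
`|M|_∞ = max_i Σ_j |M i j|`. -/
noncomputable def matInfNorm {m n : ℕ} (M : Matrix (Fin m) (Fin n) ℝ) : ℝ :=
  ⨆ i, ∑ j, |M i j|

/-- (Boundedness of the IMEX solution.) There is a unique sequence `(Vⁿ)` with
`V⁰ = V₀` satisfying the IMEX scheme `A Vⁿ = Vⁿ⁻¹ + τ N(Vⁿ⁻¹) + τ Gⁿ⁻¹`, it is
bounded, and `|Vⁿ|_∞ ≤ |V⁰|_∞ + n_x (μ C_W C_S + C_G)/γ` for all `n`. -/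
lemma rowsum_le_matInfNorm {m n : ℕ} [NeZero m] (M : Matrix (Fin m) (Fin n) ℝ) (i : Fin m) :
    ∑ j, |M i j| ≤ matInfNorm M := by
  exact le_ciSup (Set.Finite.bddAbove (Set.finite_range fun i => ∑ j, |M i j|)) i

lemma matInfNorm_le {m n : ℕ} [NeZero m] (M : Matrix (Fin m) (Fin n) ℝ) (b : ℝ)
    (h : ∀ i, ∑ j, |M i j| ≤ b) : matInfNorm M ≤ b :=
  ciSup_le h

lemma matInfNorm_nonneg {m n : ℕ} [NeZero m] (M : Matrix (Fin m) (Fin n) ℝ) :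
    0 ≤ matInfNorm M :=
  le_trans (Finset.sum_nonneg fun j _ => abs_nonneg _)
    (rowsum_le_matInfNorm M ⟨0, Nat.pos_of_ne_zero (NeZero.ne m)⟩)

lemma matInfNorm_mul_ge (nξ nx : ℕ) (hn : 2 ≤ nξ) (hnx : 1 ≤ nx) (α c : ℝ)
    (hα : 0 ≤ α) (hc : 0 ≤ c) (A : Matrix (Fin nξ) (Fin nξ) ℝ)
    (hA : A = (1 + α) • (1 : Matrix (Fin nξ) (Fin nξ) ℝ) - c • neumannLaplacian nξ)
    (U : Matrix (Fin nξ) (Fin nx) ℝ) :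
    (1 + α) * matInfNorm U ≤ matInfNorm (A * U) := by
  have : NeZero nξ := ⟨by omega⟩
  have : NeZero nx := ⟨by omega⟩
  obtain ⟨i0, hi0⟩ := Finite.exists_max (fun i : Fin nξ => ∑ j, |U i j|)
  set s : Fin nx → ℝ := fun j => if 0 ≤ U i0 j then 1 else -1 with hs
  have hs1 : ∀ j, |s j| ≤ 1 := fun j => by
    simp only [hs]; split_ifs <;> norm_num
  set u : Fin nξ → ℝ := fun k => ∑ j, U k j * s j with hu
  have hui0 : u i0 = ∑ j, |U i0 j| := by
    refine Finset.sum_congr rfl fun j _ => ?_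
    simp only [hs]; split_ifs with h
    · rw [mul_one, abs_of_nonneg h]
    · rw [abs_of_neg (not_le.mp h)]; ring
  have hmax : ∀ k, |u k| ≤ |u i0| := by
    intro k
    have h1 : |u k| ≤ ∑ j, |U k j| := by
      refine le_trans (Finset.abs_sum_le_sum_abs _ _) (Finset.sum_le_sum fun j _ => ?_)
      rw [abs_mul]
      calc |U k j| * |s j| ≤ |U k j| * 1 :=
            mul_le_mul_of_nonneg_left (hs1 j) (abs_nonneg _)
        _ = |U k j| := mul_one _
    have h2 : (0:ℝ) ≤ u i0 := hui0 ▸ Finset.sum_nonneg fun j _ => abs_nonneg _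
    rw [abs_of_nonneg h2, hui0]
    exact le_trans h1 (hi0 k)
  have heq : matInfNorm U = u i0 := by
    rw [hui0]
    exact le_antisymm (ciSup_le hi0) (rowsum_le_matInfNorm U i0)
  have hmv : A.mulVec u i0 = ∑ j, (A * U) i0 j * s j := by
    simp only [hu, Matrix.mulVec, dotProduct, Matrix.mul_apply, Finset.sum_mul,
      Finset.mul_sum]
    rw [Finset.sum_comm]
    exact Finset.sum_congr rfl fun j _ => Finset.sum_congr rfl fun k _ => by ring
  have hkey := vec_bound nξ hn α c hα hc A hA u i0 hmax
  have hub : |A.mulVec u i0| ≤ matInfNorm (A * U) := by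
    rw [hmv]
    refine le_trans (Finset.abs_sum_le_sum_abs _ _) (le_trans ?_ (rowsum_le_matInfNorm _ i0))
    refine Finset.sum_le_sum fun j _ => ?_
    rw [abs_mul]
    calc |(A*U) i0 j| * |s j| ≤ |(A*U) i0 j| * 1 :=
          mul_le_mul_of_nonneg_left (hs1 j) (abs_nonneg _)
      _ = _ := mul_one _
  have h2 : (0:ℝ) ≤ u i0 := hui0 ▸ Finset.sum_nonneg fun j _ => abs_nonneg _
  rw [heq]
  calc (1+α) * u i0 = (1+α) * |u i0| := by rw [abs_of_nonneg h2]
    _ ≤ |A.mulVec u i0| := hkey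
    _ ≤ _ := hub


theorem IMEX_boundedness (nξ nx : ℕ) (hnξ : 2 ≤ nξ) (hnx : 1 ≤ nx)
    (γ ν τ hξ : ℝ) (hγ : 0 < γ) (hν : 0 < ν) (hτ : 0 < τ) (hhξ : 0 < hξ)
    (A : Matrix (Fin nξ) (Fin nξ) ℝ)
    (hA : A = (1 + γ * τ) • (1 : Matrix (Fin nξ) (Fin nξ) ℝ)
            - (τ * ν / hξ ^ 2) • neumannLaplacian nξ)
    (x : Fin nx → ℝ) (ξ : Fin nξ → ℝ)
    (ρ : Fin nx → ℝ) (σ : Fin nξ → ℝ)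
    (hρ : ∀ j, 0 ≤ ρ j) (hσ : ∀ i, 0 ≤ σ i)
    (W : ℝ → ℝ → ℝ → ℝ → ℝ) (S : ℝ → ℝ) (CW CS CG μ : ℝ)
    (hW : ∀ a b c d, |W a b c d| ≤ CW) (hS : ∀ v, |S v| ≤ CS)
    (hμ : (∑ j, ρ j) * (∑ i, σ i) = μ)
    (N : Matrix (Fin nξ) (Fin nx) ℝ → Matrix (Fin nξ) (Fin nx) ℝ)
    (hN : ∀ V i j, N V i j
        = ∑ j', ∑ i', W (x j) (ξ i) (x j') (ξ i') * S (V i' j') * ρ j' * σ i')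
    (G : ℕ → Matrix (Fin nξ) (Fin nx) ℝ) (hG : ∀ n i j, |G n i j| ≤ CG)
    (V0 : Matrix (Fin nξ) (Fin nx) ℝ) :
    (∃! V : ℕ → Matrix (Fin nξ) (Fin nx) ℝ,
        V 0 = V0 ∧ ∀ n : ℕ, A * V (n + 1) = V n + τ • N (V n) + τ • G n) ∧
    (∀ V : ℕ → Matrix (Fin nξ) (Fin nx) ℝ,
        (V 0 = V0 ∧ ∀ n : ℕ, A * V (n + 1) = V n + τ • N (V n) + τ • G n) →
        ∀ n : ℕ, matInfNorm (V n) ≤ matInfNorm V0 + nx * (μ * CW * CS + CG) / γ) := by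
  have : NeZero nξ := ⟨by omega⟩
  have : NeZero nx := ⟨by omega⟩
  set α := γ * τ with hα
  set c := τ * ν / hξ ^ 2 with hc
  have hαpos : 0 < α := mul_pos hγ hτ
  have hcpos : 0 ≤ c := by positivity
  -- A is invertible
  have hdet : IsUnit A.det := by
    rw [isUnit_iff_ne_zero]
    intro h0
    obtain ⟨v, hv, hAv⟩ := (Matrix.exists_mulVec_eq_zero_iff).mpr h0
    obtain ⟨i0, hi0⟩ := Finite.exists_max (fun k : Fin nξ => |v k|)
    have hkey := vec_bound nξ hnξ α c (le_of_lt hαpos) hcpos A hA v i0 hi0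
    rw [hAv] at hkey
    simp only [Pi.zero_apply, abs_zero] at hkey
    have hvi0 : |v i0| = 0 := le_antisymm (by nlinarith [abs_nonneg (v i0)]) (abs_nonneg _)
    exact hv (funext fun k => abs_eq_zero.mp (le_antisymm (hvi0 ▸ hi0 k) (abs_nonneg _)))
  -- constants
  have hCW : 0 ≤ CW := le_trans (abs_nonneg _) (hW 0 0 0 0)
  have hCS : 0 ≤ CS := le_trans (abs_nonneg _) (hS 0)
  have hCG : 0 ≤ CG := le_trans (abs_nonneg _) (hG 0 ⟨0, by omega⟩ ⟨0, by omega⟩)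
  have hμ0 : 0 ≤ μ := hμ ▸ mul_nonneg (Finset.sum_nonneg fun j _ => hρ j)
    (Finset.sum_nonneg fun i _ => hσ i)
  have hK : 0 ≤ (nx : ℝ) * (μ * CW * CS + CG) :=
    mul_nonneg (Nat.cast_nonneg nx)
      (add_nonneg (mul_nonneg (mul_nonneg hμ0 hCW) hCS) hCG)
  -- bound on N entries
  have hNb : ∀ (Vm : Matrix (Fin nξ) (Fin nx) ℝ) i j, |N Vm i j| ≤ μ * CW * CS := by
    intro Vm i j
    rw [hN]
    calc |∑ j', ∑ i', W (x j) (ξ i) (x j') (ξ i') * S (Vm i' j') * ρ j' * σ i'|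
        ≤ ∑ j', |∑ i', W (x j) (ξ i) (x j') (ξ i') * S (Vm i' j') * ρ j' * σ i'| :=
          Finset.abs_sum_le_sum_abs _ _
      _ ≤ ∑ j', ∑ i', |W (x j) (ξ i) (x j') (ξ i') * S (Vm i' j') * ρ j' * σ i'| :=
          Finset.sum_le_sum fun j' _ => Finset.abs_sum_le_sum_abs _ _
      _ ≤ ∑ j', ∑ i', CW * CS * ρ j' * σ i' := by
          refine Finset.sum_le_sum fun j' _ => Finset.sum_le_sum fun i' _ => ?_
          rw [abs_mul, abs_mul, abs_mul, abs_of_nonneg (hρ j'), abs_of_nonneg (hσ i')]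
          have h1 : |W (x j) (ξ i) (x j') (ξ i')| * |S (Vm i' j')| ≤ CW * CS :=
            mul_le_mul (hW _ _ _ _) (hS _) (abs_nonneg _) hCW
          exact mul_le_mul_of_nonneg_right
            (mul_le_mul_of_nonneg_right h1 (hρ j')) (hσ i')
      _ = (∑ j', ρ j') * (∑ i', σ i') * (CW * CS) := by
          rw [Finset.sum_mul_sum, Finset.sum_mul]
          refine Finset.sum_congr rfl fun j' _ => ?_
          rw [Finset.sum_mul]
          exact Finset.sum_congr rfl fun i' _ => by ring
      _ = μ * CW * CS := by rw [hμ]; ring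
  -- row-sum bound of the RHS
  have hRHS : ∀ (Vm : Matrix (Fin nξ) (Fin nx) ℝ) (m : ℕ),
      matInfNorm (Vm + τ • N Vm + τ • G m) ≤ matInfNorm Vm + τ * ((nx:ℝ) * (μ * CW * CS + CG)) := by
    intro Vm m
    refine matInfNorm_le _ _ fun i => ?_
    calc ∑ j, |(Vm + τ • N Vm + τ • G m) i j|
        ≤ ∑ j, (|Vm i j| + τ * (μ * CW * CS) + τ * CG) := by
          refine Finset.sum_le_sum fun j _ => ?_
          simp only [Matrix.add_apply, Matrix.smul_apply, smul_eq_mul]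
          calc |Vm i j + τ * N Vm i j + τ * G m i j|
              ≤ |Vm i j| + |τ * N Vm i j| + |τ * G m i j| := by
                exact le_trans (abs_add_le _ _) (add_le_add_left (abs_add_le _ _) _)
            _ ≤ |Vm i j| + τ * (μ * CW * CS) + τ * CG := by
                rw [abs_mul, abs_mul, abs_of_nonneg (le_of_lt hτ)]
                exact add_le_add (add_le_add_right
                  (mul_le_mul_of_nonneg_left (hNb Vm i j) (le_of_lt hτ)) _)
                  (mul_le_mul_of_nonneg_left (hG m i j) (le_of_lt hτ))
      _ = (∑ j, |Vm i j|) + (nx:ℝ) * (τ * (μ * CW * CS) + τ * CG) := by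
          rw [Finset.sum_add_distrib, Finset.sum_add_distrib, Finset.sum_const,
            Finset.sum_const, Finset.card_univ, Fintype.card_fin, nsmul_eq_mul]
          push_cast; ring
      _ ≤ matInfNorm Vm + τ * ((nx:ℝ) * (μ * CW * CS + CG)) := by
          have := rowsum_le_matInfNorm Vm i
          nlinarith [this]
  -- the recursively defined solution
  obtain ⟨Vseq, hVs0, hVstep⟩ : ∃ Vf : ℕ → Matrix (Fin nξ) (Fin nx) ℝ,
      Vf 0 = V0 ∧ ∀ n, Vf (n+1) = A⁻¹ * (Vf n + τ • N (Vf n) + τ • G n) :=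
    ⟨fun n => Nat.rec V0 (fun m Vm => A⁻¹ * (Vm + τ • N Vm + τ • G m)) n, rfl, fun _ => rfl⟩
  have hVrec : ∀ n, A * Vseq (n + 1) = Vseq n + τ • N (Vseq n) + τ • G n := by
    intro n
    rw [hVstep n, Matrix.mul_nonsing_inv_cancel_left _ _ hdet]
  constructor
  · constructor
    · refine ⟨⟨hVs0, hVrec⟩, ?_⟩
      rintro V' ⟨h0, hrec⟩
      funext n
      induction n with
      | zero => exact h0.trans hVs0.symm
      | succ n ih =>
        have : A * V' (n + 1) = A * Vseq (n + 1) := by rw [hrec n, hVrec n, ih]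
        calc V' (n+1) = A⁻¹ * (A * V' (n+1)) :=
              (Matrix.nonsing_inv_mul_cancel_left _ _ hdet).symm
          _ = A⁻¹ * (A * Vseq (n+1)) := by rw [this]
          _ = Vseq (n+1) := Matrix.nonsing_inv_mul_cancel_left _ _ hdet
  · rintro V ⟨h0, hrec⟩ n
    have ha0 : 0 ≤ matInfNorm V0 := matInfNorm_nonneg V0
    have hKγ : γ * ((nx:ℝ) * (μ * CW * CS + CG) / γ) = (nx:ℝ) * (μ * CW * CS + CG) :=
      mul_div_cancel₀ _ (ne_of_gt hγ)
    induction n with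
    | zero =>
      rw [h0]
      nlinarith [div_nonneg hK (le_of_lt hγ)]
    | succ n ih =>
      have hmul := matInfNorm_mul_ge nξ nx hnξ hnx α c (le_of_lt hαpos) hcpos A hA (V (n+1))
      rw [hrec n] at hmul
      have hrhs := hRHS (V n) n
      have hchain : (1 + α) * matInfNorm (V (n+1))
          ≤ matInfNorm V0 + (nx:ℝ) * (μ * CW * CS + CG) / γ
            + τ * ((nx:ℝ) * (μ * CW * CS + CG)) := by
        calc (1 + α) * matInfNorm (V (n+1)) ≤ _ := hmul
          _ ≤ _ := hrhs
          _ ≤ _ := by linarith [ih]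
      nlinarith [matInfNorm_nonneg (V (n+1)), hchain, hKγ, mul_pos hγ hτ,
        mul_nonneg (le_of_lt (mul_pos hγ hτ)) ha0]
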